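/- arXiv:1111.5302 — 5 statements merged into one kernel-verified Lean document; each statement's English description precedes it below -/
import Mathlib

section
/- Let θ ∈ ℝ^N be such that κ_i(θ) ≠ 0 for all i, and set τ(θ) = Σ_{i=1}^N 1/κ_i(θ). If τ(θ) < 2, then the number of positive eigenvalues of J(θ) (with multiplicity) equals the number of positive eigenvalues of −D(θ); if τ(θ) > 2, then the number of positive eigenvalues of J(θ) equals the number of positive eigenvalues of −D(θ) plus one. -/
open Real Matrix Finset Module

/-- `κ_i(θ) = Σ_j cos (θ_j - θ_i)`. -/
noncomputable def kappa (N : ℕ) (θ : Fin N → ℝ) (i : Fin N) : ℝ :=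
  ∑ j, Real.cos (θ j - θ i)

/-- The diagonal matrix `D(θ)` with diagonal entries `κ_i(θ)`. -/
noncomputable def Dmat (N : ℕ) (θ : Fin N → ℝ) : Matrix (Fin N) (Fin N) ℝ :=
  Matrix.diagonal (kappa N θ)

/-- The Jacobian `J(θ)` of the Kuramoto vector field: `J_ij = cos (θ_i - θ_j)` off the
diagonal and `J_ii = -Σ_{k ≠ i} cos (θ_k - θ_i)`. -/
noncomputable def Jmat (N : ℕ) (θ : Fin N → ℝ) : Matrix (Fin N) (Fin N) ℝ :=
  Matrix.of fun i j =>
    if i = j then -∑ k ∈ Finset.univ \ {i}, Real.cos (θ k - θ i)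
    else Real.cos (θ i - θ j)

section CertFramework

variable {V : Type*} [AddCommGroup V] [Module ℝ V]
variable {V' : Type*} [AddCommGroup V'] [Module ℝ V']
variable {V₂ : Type*} [AddCommGroup V₂] [Module ℝ V₂]

/-- A certificate that `p` is the positive index of the quadratic-like function `q`. -/
def Cert (q : V → ℝ) (p : ℕ) : Prop :=
  ∃ W W' : Submodule ℝ V, (∀ x ∈ W, x ≠ 0 → 0 < q x) ∧ (∀ x ∈ W', q x ≤ 0) ∧
    finrank ℝ W = p ∧ finrank ℝ W' + p = finrank ℝ V

lemma Cert.le [FiniteDimensional ℝ V] {q : V → ℝ} {p p' : ℕ}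
    (h : Cert q p) (h' : Cert q p') : p ≤ p' := by
  obtain ⟨W, _, hpos, _, hrk, _⟩ := h
  obtain ⟨_, W', _, hnp, _, hrk'⟩ := h'
  have hd : Disjoint W W' := by
    rw [Submodule.disjoint_def]
    intro x hx hx'
    by_contra h0
    exact absurd (hnp x hx') (not_le.2 (hpos x hx h0))
  have hle := Submodule.finrank_add_finrank_le_of_disjoint hd
  omega

lemma Cert.unique [FiniteDimensional ℝ V] {q : V → ℝ} {p p' : ℕ}
    (h : Cert q p) (h' : Cert q p') : p = p' :=
  le_antisymm (h.le h') (h'.le h)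

lemma Cert.congr {q q' : V → ℝ} (hq : q = q') {p : ℕ} (h : Cert q p) : Cert q' p := hq ▸ h

lemma Cert.comp (e : V' ≃ₗ[ℝ] V) {q : V → ℝ} {p : ℕ} (h : Cert q p) :
    Cert (fun x => q (e x)) p := by
  obtain ⟨W, W', hpos, hnp, hrk, hrk'⟩ := h
  refine ⟨W.comap (e : V' →ₗ[ℝ] V), W'.comap (e : V' →ₗ[ℝ] V), ?_, ?_, ?_, ?_⟩
  · intro x hx hx0
    exact hpos _ (Submodule.mem_comap.1 hx) (by simpa using hx0)
  · intro x hx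
    exact hnp _ (Submodule.mem_comap.1 hx)
  · rw [Submodule.comap_equiv_eq_map_symm, LinearEquiv.finrank_map_eq, hrk]
  · rw [Submodule.comap_equiv_eq_map_symm, LinearEquiv.finrank_map_eq, hrk', e.finrank_eq]

lemma finrank_submodule_prod [FiniteDimensional ℝ V] [FiniteDimensional ℝ V₂]
    (W₁ : Submodule ℝ V) (W₂ : Submodule ℝ V₂) :
    finrank ℝ (W₁.prod W₂) = finrank ℝ W₁ + finrank ℝ W₂ := by
  let f : (W₁ × W₂) →ₗ[ℝ] V × V₂ := (W₁.subtype).prodMap (W₂.subtype)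
  have hinj : Function.Injective f := by
    intro a b hab
    have h1 : (a.1 : V) = b.1 := congrArg Prod.fst hab
    have h2 : (a.2 : V₂) = b.2 := congrArg Prod.snd hab
    exact Prod.ext (Subtype.ext h1) (Subtype.ext h2)
  have hran : LinearMap.range f = W₁.prod W₂ := by
    ext x
    constructor
    · rintro ⟨⟨a, b⟩, rfl⟩
      exact ⟨a.2, b.2⟩
    · rintro ⟨h1, h2⟩
      exact ⟨(⟨x.1, h1⟩, ⟨x.2, h2⟩), rfl⟩
  calc finrank ℝ (W₁.prod W₂) = finrank ℝ (LinearMap.range f) := by rw [hran]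
    _ = finrank ℝ (W₁ × W₂) := ((LinearEquiv.ofInjective f hinj).finrank_eq).symm
    _ = finrank ℝ W₁ + finrank ℝ W₂ := Module.finrank_prod

lemma Cert.prod [FiniteDimensional ℝ V] [FiniteDimensional ℝ V₂]
    {q₁ : V → ℝ} {q₂ : V₂ → ℝ} (h01 : q₁ 0 = 0) (h02 : q₂ 0 = 0) {p₁ p₂ : ℕ}
    (h₁ : Cert q₁ p₁) (h₂ : Cert q₂ p₂) :
    Cert (fun x : V × V₂ => q₁ x.1 + q₂ x.2) (p₁ + p₂) := by
  obtain ⟨W₁, W₁', hpos₁, hnp₁, hrk₁, hrk₁'⟩ := h₁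
  obtain ⟨W₂, W₂', hpos₂, hnp₂, hrk₂, hrk₂'⟩ := h₂
  refine ⟨W₁.prod W₂, W₁'.prod W₂', ?_, ?_, ?_, ?_⟩
  · rintro ⟨x, y⟩ ⟨hx, hy⟩ hxy
    have hx' : 0 ≤ q₁ x := by
      rcases eq_or_ne x 0 with rfl | h
      · simp [h01]
      · exact le_of_lt (hpos₁ x hx h)
    have hy' : 0 ≤ q₂ y := by
      rcases eq_or_ne y 0 with rfl | h
      · simp [h02]
      · exact le_of_lt (hpos₂ y hy h)
    rcases eq_or_ne x 0 with rfl | h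
    · have hy0 : y ≠ 0 := by
        intro h; exact hxy (by simp [h])
      have := hpos₂ y hy hy0
      simpa [h01] using lt_of_lt_of_le this (by linarith)
    · have := hpos₁ x hx h
      dsimp only
      linarith
  · rintro ⟨x, y⟩ ⟨hx, hy⟩
    have := hnp₁ x hx
    have := hnp₂ y hy
    dsimp only
    linarith
  · rw [finrank_submodule_prod, hrk₁, hrk₂]
  · rw [finrank_submodule_prod, Module.finrank_prod]
    omega

end CertFramework

section Coord
variable {ι : Type*} [Fintype ι]

/-- Functions vanishing off `p`. -/
def coordSub (p : ι → Prop) [DecidablePred p] : Submodule ℝ (ι → ℝ) where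
  carrier := {x | ∀ i, ¬ p i → x i = 0}
  add_mem' := by intro a b ha hb i hi; simp [ha i hi, hb i hi]
  zero_mem' := by intro i _; rfl
  smul_mem' := by intro c a ha i hi; simp [ha i hi]

noncomputable def coordSubEquiv (p : ι → Prop) [DecidablePred p] :
    coordSub p ≃ₗ[ℝ] ({i // p i} → ℝ) where
  toFun x := fun i => x.1 i
  map_add' := fun a b => rfl
  map_smul' := fun c a => rfl
  invFun c := ⟨fun i => if h : p i then c ⟨i, h⟩ else 0, fun i hi => by simp [hi]⟩
  left_inv := by
    rintro ⟨x, hx⟩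
    ext i
    by_cases h : p i <;> simp [h, hx i]
  right_inv := by
    intro c
    ext ⟨i, hi⟩
    simp [hi]

lemma finrank_coordSub (p : ι → Prop) [DecidablePred p] :
    finrank ℝ (coordSub p) = (univ.filter p).card := by
  classical
  rw [(coordSubEquiv p).finrank_eq, Module.finrank_fintype_fun_eq_card, Fintype.card_subtype]

lemma cert_coords [DecidableEq ι] (μ : ι → ℝ) :
    Cert (fun c : ι → ℝ => ∑ i, μ i * c i ^ 2) ((univ.filter fun i => 0 < μ i).card) := by
  classical
  refine ⟨coordSub (fun i => 0 < μ i), coordSub (fun i => ¬ 0 < μ i), ?_, ?_,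
    finrank_coordSub _, ?_⟩
  · intro x hx hx0
    apply Finset.sum_pos'
    · intro i _
      by_cases h : 0 < μ i
      · positivity
      · rw [hx i h]; simp
    · obtain ⟨i, hi⟩ := Function.ne_iff.1 hx0
      refine ⟨i, mem_univ i, ?_⟩
      have h : 0 < μ i := by
        by_contra h
        exact hi (hx i h)
      have : x i ≠ 0 := hi
      positivity
  · intro x hx
    apply Finset.sum_nonpos
    intro i _
    by_cases h : 0 < μ i
    · rw [hx i (by simpa using h)]; simp
    · have : μ i ≤ 0 := le_of_not_gt h
      have : μ i * x i ^ 2 ≤ 0 := mul_nonpos_of_nonpos_of_nonneg this (sq_nonneg _)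
      simpa using this
  · rw [finrank_coordSub, Module.finrank_fintype_fun_eq_card]
    have := Finset.card_filter_add_card_filter_not (s := (univ : Finset ι))
      (p := fun i => 0 < μ i)
    rw [Finset.card_univ] at this
    omega

end Coord

section Spectral

lemma dot_eq_sum_eigen {n : ℕ} {A : Matrix (Fin n) (Fin n) ℝ} (hA : A.IsHermitian)
    (x : EuclideanSpace ℝ (Fin n)) :
    (x : Fin n → ℝ) ⬝ᵥ A *ᵥ (x : Fin n → ℝ)
      = ∑ i, hA.eigenvalues i * (hA.eigenvectorBasis.repr x i) ^ 2 := by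
  classical
  set b := hA.eigenvectorBasis
  set c : Fin n → ℝ := fun i => b.repr x i with hc
  have hx : x = ∑ i, c i • b i := by
    simpa [hc, OrthonormalBasis.repr_apply_apply] using (b.sum_repr' x).symm
  have hdot : ∀ u y : EuclideanSpace ℝ (Fin n), (u : Fin n → ℝ) ⬝ᵥ (y : Fin n → ℝ) = inner ℝ u y := by
    intro u y
    rw [EuclideanSpace.inner_eq_star_dotProduct]
    exact dotProduct_comm _ _
  have hAx : A *ᵥ (x : Fin n → ℝ) = ∑ i, (c i * hA.eigenvalues i) • (b i : Fin n → ℝ) := by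
    have : (x : Fin n → ℝ) = ∑ i, c i • (b i : Fin n → ℝ) := by
      rw [hx, WithLp.ofLp_sum]
      simp only [WithLp.ofLp_smul]
    rw [this]
    rw [show A *ᵥ (∑ i, c i • (b i : Fin n → ℝ)) = ∑ i, c i • (A *ᵥ (b i : Fin n → ℝ)) by
      simp only [← Matrix.mulVecLin_apply, map_sum, LinearMap.map_smul]]
    refine Finset.sum_congr rfl fun i _ => ?_
    rw [← smul_smul]
    exact congrArg (fun y => c i • y) (hA.mulVec_eigenvectorBasis i)
  calc (x : Fin n → ℝ) ⬝ᵥ A *ᵥ (x : Fin n → ℝ)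
      = ∑ i, (c i * hA.eigenvalues i) * ((x : Fin n → ℝ) ⬝ᵥ (b i : Fin n → ℝ)) := by
        rw [hAx]
        rw [show ((x : Fin n → ℝ) ⬝ᵥ ∑ i, (c i * hA.eigenvalues i) • (b i : Fin n → ℝ))
            = ∑ i, (x : Fin n → ℝ) ⬝ᵥ ((c i * hA.eigenvalues i) • (b i : Fin n → ℝ)) by
          simp only [dotProduct, Finset.sum_apply, Finset.mul_sum]
          exact Finset.sum_comm]
        exact Finset.sum_congr rfl fun i _ => by rw [dotProduct_smul, smul_eq_mul]
    _ = ∑ i, hA.eigenvalues i * (c i) ^ 2 := by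
        refine Finset.sum_congr rfl fun i _ => ?_
        rw [hdot x (b i), real_inner_comm, ← OrthonormalBasis.repr_apply_apply]
        have hci : b.repr x i = c i := rfl
        rw [hci]
        ring
    _ = ∑ i, hA.eigenvalues i * (hA.eigenvectorBasis.repr x i) ^ 2 := rfl

lemma cert_hermitian {n : ℕ} {A : Matrix (Fin n) (Fin n) ℝ} (hA : A.IsHermitian) :
    Cert (fun x : Fin n → ℝ => x ⬝ᵥ A *ᵥ x) ((univ.filter fun i => 0 < hA.eigenvalues i).card) := by
  classical
  have base := cert_coords hA.eigenvalues
  let e : (Fin n → ℝ) ≃ₗ[ℝ] (Fin n → ℝ) :=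
    (WithLp.linearEquiv 2 ℝ (Fin n → ℝ)).symm.trans
      ((hA.eigenvectorBasis.repr.toLinearEquiv).trans (WithLp.linearEquiv 2 ℝ (Fin n → ℝ)))
  have hcert := base.comp e
  refine hcert.congr ?_
  funext x
  exact (dot_eq_sum_eigen hA ((WithLp.linearEquiv 2 ℝ (Fin n → ℝ)).symm x)).symm

end Spectral

section Shear

variable {M : Type*} [AddCommGroup M] [Module ℝ M]
variable {M₂ : Type*} [AddCommGroup M₂] [Module ℝ M₂]

/-- Shear in the second coordinate. -/
def shearSnd (T : M →ₗ[ℝ] M₂) : (M × M₂) ≃ₗ[ℝ] (M × M₂) where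
  toFun p := (p.1, p.2 + T p.1)
  invFun p := (p.1, p.2 - T p.1)
  map_add' a b := by
    ext
    · rfl
    · simp only [Prod.snd_add, map_add, Prod.fst_add]
      abel
  map_smul' c a := by
    ext
    · rfl
    · simp [_root_.map_smul]
  left_inv p := by ext <;> simp
  right_inv p := by ext <;> simp

@[simp] lemma shearSnd_apply (T : M →ₗ[ℝ] M₂) (p : M × M₂) :
    shearSnd T p = (p.1, p.2 + T p.1) := rfl

/-- Shear in the first coordinate. -/
def shearFst (T : M₂ →ₗ[ℝ] M) : (M × M₂) ≃ₗ[ℝ] (M × M₂) where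
  toFun p := (p.1 + T p.2, p.2)
  invFun p := (p.1 - T p.2, p.2)
  map_add' a b := by
    ext
    · simp only [Prod.fst_add, map_add, Prod.snd_add]
      abel
    · rfl
  map_smul' c a := by
    ext
    · simp [_root_.map_smul]
    · rfl
  left_inv p := by ext <;> simp
  right_inv p := by ext <;> simp

@[simp] lemma shearFst_apply (T : M₂ →ₗ[ℝ] M) (p : M × M₂) :
    shearFst T p = (p.1 + T p.2, p.2) := rfl

/-- The linear functional `x ↦ ∑ i, a i * x i`. -/
def dotLM {n : ℕ} (a : Fin n → ℝ) : (Fin n → ℝ) →ₗ[ℝ] ℝ where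
  toFun x := ∑ i, a i * x i
  map_add' x y := by
    simp [mul_add, Finset.sum_add_distrib]
  map_smul' c x := by
    simp only [Pi.smul_apply, smul_eq_mul, RingHom.id_apply, Finset.mul_sum]
    exact Finset.sum_congr rfl fun i _ => by ring

@[simp] lemma dotLM_apply {n : ℕ} (a x : Fin n → ℝ) : dotLM a x = ∑ i, a i * x i := rfl

end Shear

section Kuramoto

open Real

variable (N : ℕ) (θ : Fin N → ℝ)

lemma kappa_expand (i : Fin N) :
    kappa N θ i = (∑ j, Real.sin (θ j)) * Real.sin (θ i)
      + (∑ j, Real.cos (θ j)) * Real.cos (θ i) := by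
  unfold kappa
  simp only [Real.cos_sub]
  rw [Finset.sum_add_distrib, ← Finset.sum_mul, ← Finset.sum_mul]
  ring

lemma qD_apply (x : Fin N → ℝ) :
    x ⬝ᵥ (-(Dmat N θ)) *ᵥ x = -∑ i, kappa N θ i * x i ^ 2 := by
  rw [Matrix.neg_mulVec, dotProduct_neg, neg_inj]
  unfold Dmat
  simp only [dotProduct, Matrix.mulVec_diagonal]
  exact Finset.sum_congr rfl fun i _ => by ring

lemma dot_vecMulVec (a x : Fin N → ℝ) :
    x ⬝ᵥ (Matrix.vecMulVec a a) *ᵥ x = (∑ i, a i * x i) ^ 2 := by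
  have h : ∀ i, ((Matrix.vecMulVec a a) *ᵥ x) i = (∑ j, a j * x j) * a i := by
    intro i
    simp only [Matrix.mulVec, Matrix.vecMulVec_apply, dotProduct, Finset.sum_mul]
    exact Finset.sum_congr rfl fun j _ => by ring
  simp only [dotProduct, h]
  rw [sq, Finset.mul_sum]
  exact Finset.sum_congr rfl fun i _ => by ring

lemma Jmat_decomp :
    Jmat N θ = -(Dmat N θ) + Matrix.vecMulVec (fun i => Real.sin (θ i)) (fun i => Real.sin (θ i))
      + Matrix.vecMulVec (fun i => Real.cos (θ i)) (fun i => Real.cos (θ i)) := by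
  ext i j
  simp only [Jmat, Matrix.of_apply, Matrix.add_apply, Matrix.neg_apply, Dmat,
    Matrix.diagonal_apply, Matrix.vecMulVec_apply]
  by_cases h : i = j
  · subst h
    simp only [eq_self_iff_true, if_true]
    have hsplit : kappa N θ i = (∑ k ∈ Finset.univ \ {i}, Real.cos (θ k - θ i)) + 1 := by
      unfold kappa
      rw [Finset.sum_eq_sum_sdiff_singleton_add (Finset.mem_univ i)]
      simp
    have hpyth : Real.sin (θ i) * Real.sin (θ i) + Real.cos (θ i) * Real.cos (θ i) = 1 := by
      have := Real.sin_sq_add_cos_sq (θ i)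
      nlinarith [this]
    rw [hsplit]
    linarith
  · simp only [if_neg h, if_neg h]
    rw [Real.cos_sub]
    ring

lemma qJ_apply (x : Fin N → ℝ) :
    x ⬝ᵥ (Jmat N θ) *ᵥ x = (-∑ i, kappa N θ i * x i ^ 2)
      + (∑ i, Real.sin (θ i) * x i) ^ 2 + (∑ i, Real.cos (θ i) * x i) ^ 2 := by
  rw [Jmat_decomp]
  rw [Matrix.add_mulVec, Matrix.add_mulVec, dotProduct_add, dotProduct_add]
  rw [qD_apply, dot_vecMulVec, dot_vecMulVec]

end Kuramoto

section Master

variable (N : ℕ) (θ : Fin N → ℝ)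

lemma qS_master (hκ : ∀ i, kappa N θ i ≠ 0) (c d : ℝ) :
    ((∑ j, Real.sin (θ j)) ^ 2 + (∑ j, Real.cos (θ j)) ^ 2) ^ 2 *
      ((∑ i, (c * Real.sin (θ i) + d * Real.cos (θ i)) ^ 2 / kappa N θ i) - c ^ 2 - d ^ 2)
    = (d * (∑ j, Real.sin (θ j)) - c * (∑ j, Real.cos (θ j))) ^ 2 *
        ((∑ j, Real.sin (θ j)) ^ 2 + (∑ j, Real.cos (θ j)) ^ 2) *
        ((∑ i, 1 / kappa N θ i) - 2) := by
  set Sv := ∑ j, Real.sin (θ j) with hSv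
  set Sw := ∑ j, Real.cos (θ j) with hSw
  have hterm : ∀ i : Fin N,
      (Sv ^ 2 + Sw ^ 2) ^ 2 * ((c * Real.sin (θ i) + d * Real.cos (θ i)) ^ 2 / kappa N θ i)
        = (c * Sv + d * Sw) ^ 2 * kappa N θ i
          + 2 * (c * Sv + d * Sw) * (d * Sv - c * Sw) * (Sv * Real.cos (θ i) - Sw * Real.sin (θ i))
          + (d * Sv - c * Sw) ^ 2 * ((Sv ^ 2 + Sw ^ 2) * (1 / kappa N θ i) - kappa N θ i) := by
    intro i
    have h1 : Real.sin (θ i) ^ 2 + Real.cos (θ i) ^ 2 = 1 := Real.sin_sq_add_cos_sq (θ i)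
    have hk : kappa N θ i = Sv * Real.sin (θ i) + Sw * Real.cos (θ i) := kappa_expand N θ i
    have hκi : kappa N θ i ≠ 0 := hκ i
    have hlin : (Sv ^ 2 + Sw ^ 2) * (c * Real.sin (θ i) + d * Real.cos (θ i))
        = (c * Sv + d * Sw) * kappa N θ i
          + (d * Sv - c * Sw) * (Sv * Real.cos (θ i) - Sw * Real.sin (θ i)) := by
      rw [hk]; ring
    have hm2 : (Sv * Real.cos (θ i) - Sw * Real.sin (θ i)) ^ 2
        = (Sv ^ 2 + Sw ^ 2) - kappa N θ i ^ 2 := by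
      rw [hk]
      linear_combination (Sv ^ 2 + Sw ^ 2) * h1
    have hm2' : (Sv ^ 2 + Sw ^ 2) * (1 / kappa N θ i) - kappa N θ i
        = (Sv * Real.cos (θ i) - Sw * Real.sin (θ i)) ^ 2 / kappa N θ i := by
      rw [hm2]
      field_simp
    have e1 : (Sv ^ 2 + Sw ^ 2) ^ 2 * ((c * Real.sin (θ i) + d * Real.cos (θ i)) ^ 2 / kappa N θ i)
        = ((Sv ^ 2 + Sw ^ 2) * (c * Real.sin (θ i) + d * Real.cos (θ i))) ^ 2 / kappa N θ i := by
      ring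
    rw [e1, hlin, hm2']
    field_simp
    ring
  have hSigk : ∑ i, kappa N θ i = Sv ^ 2 + Sw ^ 2 := by
    have h : (∑ i, kappa N θ i)
        = ∑ i, (Sv * Real.sin (θ i) + Sw * Real.cos (θ i)) :=
      Finset.sum_congr rfl (fun i _ => kappa_expand N θ i)
    rw [h, Finset.sum_add_distrib, ← Finset.mul_sum, ← Finset.mul_sum, ← hSv, ← hSw]
    ring
  have hSigm : ∑ i, (Sv * Real.cos (θ i) - Sw * Real.sin (θ i)) = 0 := by
    rw [Finset.sum_sub_distrib, ← Finset.mul_sum, ← Finset.mul_sum, ← hSv, ← hSw]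
    ring
  have hsum : (Sv ^ 2 + Sw ^ 2) ^ 2
        * (∑ i, (c * Real.sin (θ i) + d * Real.cos (θ i)) ^ 2 / kappa N θ i)
      = (c * Sv + d * Sw) ^ 2 * (Sv ^ 2 + Sw ^ 2)
        + (d * Sv - c * Sw) ^ 2 * ((Sv ^ 2 + Sw ^ 2) * (∑ i, 1 / kappa N θ i)
            - (Sv ^ 2 + Sw ^ 2)) := by
    have h : (∑ i, (Sv ^ 2 + Sw ^ 2) ^ 2
          * ((c * Real.sin (θ i) + d * Real.cos (θ i)) ^ 2 / kappa N θ i))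
        = ∑ i, ((c * Sv + d * Sw) ^ 2 * kappa N θ i
          + 2 * (c * Sv + d * Sw) * (d * Sv - c * Sw)
              * (Sv * Real.cos (θ i) - Sw * Real.sin (θ i))
          + (d * Sv - c * Sw) ^ 2 * ((Sv ^ 2 + Sw ^ 2) * (1 / kappa N θ i) - kappa N θ i)) :=
      Finset.sum_congr rfl (fun i _ => hterm i)
    rw [Finset.mul_sum, h]
    simp only [Finset.sum_add_distrib, Finset.sum_sub_distrib, ← Finset.mul_sum]
    rw [hSigk, ← hSv, ← hSw]
    ring
  calc (Sv ^ 2 + Sw ^ 2) ^ 2 *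
        ((∑ i, (c * Real.sin (θ i) + d * Real.cos (θ i)) ^ 2 / kappa N θ i) - c ^ 2 - d ^ 2)
      = (Sv ^ 2 + Sw ^ 2) ^ 2
          * (∑ i, (c * Real.sin (θ i) + d * Real.cos (θ i)) ^ 2 / kappa N θ i)
        - (Sv ^ 2 + Sw ^ 2) ^ 2 * (c ^ 2 + d ^ 2) := by ring
    _ = (d * Sv - c * Sw) ^ 2 * (Sv ^ 2 + Sw ^ 2) * ((∑ i, 1 / kappa N θ i) - 2) := by
        rw [hsum]
        ring
end Master

theorem stmt1 (N : ℕ) (hN : 2 ≤ N) (θ : Fin N → ℝ)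
    (hκ : ∀ i, kappa N θ i ≠ 0)
    (hJ : (Jmat N θ).IsHermitian) (hD : (-(Dmat N θ)).IsHermitian) :
    (∑ i, 1 / kappa N θ i < 2 →
      (Finset.univ.filter fun i => 0 < hJ.eigenvalues i).card
        = (Finset.univ.filter fun i => 0 < hD.eigenvalues i).card) ∧
    (2 < ∑ i, 1 / kappa N θ i →
      (Finset.univ.filter fun i => 0 < hJ.eigenvalues i).card
        = (Finset.univ.filter fun i => 0 < hD.eigenvalues i).card + 1) := by
  classical
  have i0 : Fin N := ⟨0, by omega⟩
  set Sv := ∑ j, Real.sin (θ j) with hSv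
  set Sw := ∑ j, Real.cos (θ j) with hSw
  have hR2 : 0 < Sv ^ 2 + Sw ^ 2 := by
    rcases lt_or_ge 0 (Sv ^ 2 + Sw ^ 2) with h | h
    · exact h
    · exfalso
      have hSv0 : Sv = 0 := by nlinarith [sq_nonneg Sv, sq_nonneg Sw]
      have hSw0 : Sw = 0 := by nlinarith [sq_nonneg Sv, sq_nonneg Sw]
      have hke := kappa_expand N θ i0
      rw [← hSv, ← hSw, hSv0, hSw0] at hke
      exact hκ i0 (by rw [hke]; ring)
  have hfr2 : finrank ℝ (ℝ × ℝ) = 2 := by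
    rw [Module.finrank_prod, finrank_self]
  set qS : ℝ × ℝ → ℝ := fun y =>
    (∑ i, (y.1 * Real.sin (θ i) + y.2 * Real.cos (θ i)) ^ 2 / kappa N θ i)
      - y.1 ^ 2 - y.2 ^ 2 with hqS
  set Φ : (Fin N → ℝ) × (ℝ × ℝ) → ℝ := fun p =>
    (-∑ i, kappa N θ i * p.1 i ^ 2)
      + 2 * (∑ i, p.1 i * (p.2.1 * Real.sin (θ i) + p.2.2 * Real.cos (θ i)))
      - p.2.1 ^ 2 - p.2.2 ^ 2 with hΦ
  have hmaster : ∀ c d : ℝ,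
      (Sv ^ 2 + Sw ^ 2) ^ 2 * qS (c, d)
        = (d * Sv - c * Sw) ^ 2 * (Sv ^ 2 + Sw ^ 2) * ((∑ i, 1 / kappa N θ i) - 2) := by
    intro c d
    have h := qS_master N θ hκ c d
    rw [← hSv, ← hSw] at h
    exact h
  have hqval : ∀ y : ℝ × ℝ, qS y
      = ((y.2 * Sv - y.1 * Sw) ^ 2 * ((∑ i, 1 / kappa N θ i) - 2)) / (Sv ^ 2 + Sw ^ 2) := by
    intro y
    rw [eq_div_iff hR2.ne']
    apply mul_left_cancel₀ (pow_ne_zero 2 hR2.ne')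
    have hm := hmaster y.1 y.2
    have hy : ((y.1, y.2) : ℝ × ℝ) = y := rfl
    rw [hy] at hm
    linear_combination (Sv ^ 2 + Sw ^ 2) * hm
  -- the main bridge: any certificate for qS yields the eigenvalue count relation
  have main : ∀ s : ℕ, Cert qS s →
      (Finset.univ.filter fun i => 0 < hJ.eigenvalues i).card
        = (Finset.univ.filter fun i => 0 < hD.eigenvalues i).card + s := by
    intro s certS
    -- first decomposition : Φ ≅ qJ ⊕ qneg
    have certJ := cert_hermitian hJ
    have certneg : Cert (fun y : ℝ × ℝ => -y.1 ^ 2 - y.2 ^ 2) 0 := by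
      refine ⟨⊥, ⊤, ?_, ?_, ?_, ?_⟩
      · intro x hx hx0
        exact absurd ((Submodule.mem_bot ℝ).1 hx) hx0
      · intro y _
        dsimp only
        nlinarith [sq_nonneg y.1, sq_nonneg y.2]
      · exact finrank_bot ℝ _
      · rw [finrank_top, hfr2]
    have cprod1 := certJ.prod (by simp) (by norm_num) certneg
    set T1 : (Fin N → ℝ) →ₗ[ℝ] ℝ × ℝ :=
      -((dotLM (fun i => Real.sin (θ i))).prod (dotLM (fun i => Real.cos (θ i)))) with hT1
    have c1 := cprod1.comp (shearSnd T1)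
    have c1Φ : Cert Φ
        ((Finset.univ.filter fun i => 0 < hJ.eigenvalues i).card + 0) := by
      refine c1.congr (funext fun p => ?_)
      have hz : ∑ i, p.1 i * (p.2.1 * Real.sin (θ i) + p.2.2 * Real.cos (θ i))
          = p.2.1 * (∑ i, Real.sin (θ i) * p.1 i) + p.2.2 * (∑ i, Real.cos (θ i) * p.1 i) := by
        rw [Finset.mul_sum, Finset.mul_sum, ← Finset.sum_add_distrib]
        exact Finset.sum_congr rfl fun i _ => by ring
      simp only [shearSnd_apply, hT1, LinearMap.neg_apply, LinearMap.prod_apply, Pi.prod, Function.prod_apply,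
        dotLM_apply, Prod.fst_add, Prod.snd_add, Prod.fst_neg, Prod.snd_neg]
      rw [qJ_apply, hΦ]
      dsimp only
      rw [hz]
      ring
    -- second decomposition : Φ ≅ qD ⊕ qS
    have certD := cert_hermitian hD
    have certD' : Cert (fun x : Fin N → ℝ => -∑ i, kappa N θ i * x i ^ 2)
        ((Finset.univ.filter fun i => 0 < hD.eigenvalues i).card) :=
      certD.congr (funext fun x => qD_apply N θ x)
    have hqS0 : qS 0 = 0 := by
      rw [hqS]
      dsimp only
      simp
    have cprod2 := certD'.prod (by simp) hqS0 certS
    set T2 : (ℝ × ℝ) →ₗ[ℝ] (Fin N → ℝ) :=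
      { toFun := fun y => fun i => -((y.1 * Real.sin (θ i) + y.2 * Real.cos (θ i)) / kappa N θ i)
        map_add' := by
          intro a b
          funext i
          simp only [Prod.fst_add, Prod.snd_add, Pi.add_apply]
          ring
        map_smul' := by
          intro c a
          funext i
          simp only [Prod.smul_fst, Prod.smul_snd, Pi.smul_apply, smul_eq_mul, RingHom.id_apply]
          ring } with hT2
    have c2 := cprod2.comp (shearFst T2)
    have c2Φ : Cert Φ
        ((Finset.univ.filter fun i => 0 < hD.eigenvalues i).card + s) := by
      refine c2.congr (funext fun p => ?_)
      simp only [shearFst_apply, hT2, LinearMap.coe_mk, AddHom.coe_mk, Pi.add_apply]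
      have hpt : ∀ i : Fin N,
          kappa N θ i * (p.1 i + -((p.2.1 * Real.sin (θ i) + p.2.2 * Real.cos (θ i))
              / kappa N θ i)) ^ 2
            = kappa N θ i * p.1 i ^ 2
              - 2 * (p.1 i * (p.2.1 * Real.sin (θ i) + p.2.2 * Real.cos (θ i)))
              + (p.2.1 * Real.sin (θ i) + p.2.2 * Real.cos (θ i)) ^ 2 / kappa N θ i := by
        intro i
        have hκi := hκ i
        field_simp
        ring
      have hsum : ∑ i, kappa N θ i * (p.1 i + -((p.2.1 * Real.sin (θ i)
              + p.2.2 * Real.cos (θ i)) / kappa N θ i)) ^ 2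
          = (∑ i, kappa N θ i * p.1 i ^ 2)
            - 2 * (∑ i, p.1 i * (p.2.1 * Real.sin (θ i) + p.2.2 * Real.cos (θ i)))
            + ∑ i, (p.2.1 * Real.sin (θ i) + p.2.2 * Real.cos (θ i)) ^ 2 / kappa N θ i := by
        have h : (∑ i, kappa N θ i * (p.1 i + -((p.2.1 * Real.sin (θ i)
                + p.2.2 * Real.cos (θ i)) / kappa N θ i)) ^ 2)
            = ∑ i, (kappa N θ i * p.1 i ^ 2
              - 2 * (p.1 i * (p.2.1 * Real.sin (θ i) + p.2.2 * Real.cos (θ i)))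
              + (p.2.1 * Real.sin (θ i) + p.2.2 * Real.cos (θ i)) ^ 2 / kappa N θ i) :=
          Finset.sum_congr rfl fun i _ => hpt i
        rw [h]
        simp only [Finset.sum_add_distrib, Finset.sum_sub_distrib, ← Finset.mul_sum]
      rw [hΦ, hqS]
      dsimp only
      rw [hsum]
      ring
    have hfin := c1Φ.unique c2Φ
    omega
  constructor
  · -- τ < 2
    intro hlt
    have certS0 : Cert qS 0 := by
      refine ⟨⊥, ⊤, ?_, ?_, finrank_bot ℝ _, by rw [finrank_top, hfr2]⟩
      · intro x hx hx0
        exact absurd ((Submodule.mem_bot ℝ).1 hx) hx0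
      · intro y _
        rw [hqval y]
        have hnum : (y.2 * Sv - y.1 * Sw) ^ 2 * ((∑ i, 1 / kappa N θ i) - 2)
            = -((y.2 * Sv - y.1 * Sw) ^ 2 * (2 - ∑ i, 1 / kappa N θ i)) := by ring
        rw [hnum]
        apply div_nonpos_of_nonpos_of_nonneg _ hR2.le
        exact neg_nonpos.2 (mul_nonneg (sq_nonneg _) (by linarith))
    have := main 0 certS0
    omega
  · -- τ > 2
    intro hgt
    have hu1 : ((-Sw, Sv) : ℝ × ℝ) ≠ 0 := by
      intro h
      rw [Prod.ext_iff] at h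
      obtain ⟨h1, h2⟩ := h
      simp only [Prod.fst_zero, Prod.snd_zero, neg_eq_zero] at h1 h2
      rw [h1, h2] at hR2
      norm_num at hR2
    have hu0 : ((Sv, Sw) : ℝ × ℝ) ≠ 0 := by
      intro h
      rw [Prod.ext_iff] at h
      obtain ⟨h1, h2⟩ := h
      simp only [Prod.fst_zero, Prod.snd_zero] at h1 h2
      rw [h1, h2] at hR2
      norm_num at hR2
    have certS1 : Cert qS 1 := by
      refine ⟨Submodule.span ℝ {((-Sw, Sv) : ℝ × ℝ)}, Submodule.span ℝ {((Sv, Sw) : ℝ × ℝ)},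
        ?_, ?_, finrank_span_singleton hu1, by rw [finrank_span_singleton hu0, hfr2]⟩
      · intro y hy hy0
        obtain ⟨t, rfl⟩ := Submodule.mem_span_singleton.1 hy
        have ht0 : t ≠ 0 := by
          intro h
          rw [h, zero_smul] at hy0
          exact hy0 rfl
        rw [hqval]
        have hB : ((t • ((-Sw, Sv) : ℝ × ℝ)).2 * Sv - (t • ((-Sw, Sv) : ℝ × ℝ)).1 * Sw)
            = t * (Sv ^ 2 + Sw ^ 2) := by
          simp only [Prod.smul_fst, Prod.smul_snd, smul_eq_mul]
          ring
        rw [hB]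
        have hBpos : 0 < (t * (Sv ^ 2 + Sw ^ 2)) ^ 2 := by
          rw [sq]
          exact mul_self_pos.2 (mul_ne_zero ht0 hR2.ne')
        exact div_pos (mul_pos hBpos (by linarith)) hR2
      · intro y hy
        obtain ⟨t, rfl⟩ := Submodule.mem_span_singleton.1 hy
        rw [hqval]
        have hB : ((t • ((Sv, Sw) : ℝ × ℝ)).2 * Sv - (t • ((Sv, Sw) : ℝ × ℝ)).1 * Sw) = 0 := by
          simp only [Prod.smul_fst, Prod.smul_snd, smul_eq_mul]
          ring
        rw [hB]
        norm_num
    have := main 1 certS1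
    omega
end

section
/- Let θ ∈ ℝ^N satisfy |θ_i − θ_j| ≤ π for all i, j, and suppose J(θ) is negative semidefinite. Then for every ζ ∈ [0,1], the matrix J(ζθ) is negative semidefinite. (Consequently the set of stable configurations is star-shaped about the origin, hence simply connected.) -/
open Real Matrix Finset

/-- `J(θ)` is negative semidefinite iff `-J(θ)` is positive semidefinite. -/
def NegSemidefJ (N : ℕ) (θ : Fin N → ℝ) : Prop := (-(Jmat N θ)).PosSemidef

lemma cos_le_cos_mul {ζ x : ℝ} (h0 : 0 ≤ ζ) (h1 : ζ ≤ 1) (hx : |x| ≤ Real.pi) :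
    Real.cos x ≤ Real.cos (ζ * x) := by
  rw [← Real.cos_abs x, ← Real.cos_abs (ζ * x)]
  apply Real.cos_le_cos_of_nonneg_of_le_pi (abs_nonneg _) hx
  rw [abs_mul, abs_of_nonneg h0]
  nlinarith [abs_nonneg x]

lemma Jmat_isHermitian (N : ℕ) (θ : Fin N → ℝ) : (Jmat N θ).IsHermitian := by
  ext i j
  simp only [Jmat, conjTranspose_apply, of_apply, star_trivial]
  by_cases h : i = j
  · subst h; simp
  · rw [if_neg (Ne.symm h), if_neg h, ← Real.cos_neg, neg_sub]

lemma quadform (N : ℕ) (θ : Fin N → ℝ) (x : Fin N → ℝ) :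
    x ⬝ᵥ (-(Jmat N θ)) *ᵥ x
      = ∑ i, ∑ j, Real.cos (θ i - θ j) * (x i ^ 2 - x i * x j) := by
  simp only [dotProduct, mulVec, dotProduct, Matrix.neg_apply, Jmat, of_apply, Finset.mul_sum]
  refine Finset.sum_congr rfl fun i _ => ?_
  rw [Finset.sum_eq_sum_sdiff_singleton_add (Finset.mem_univ i),
      Finset.sum_eq_sum_sdiff_singleton_add (Finset.mem_univ i)
        (fun j => Real.cos (θ i - θ j) * (x i ^ 2 - x i * x j))]
  rw [if_pos rfl]
  have h1 : ∀ j ∈ Finset.univ \ ({i} : Finset (Fin N)),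
      x i * ((-if i = j then -∑ k ∈ Finset.univ \ {i}, Real.cos (θ k - θ i)
        else Real.cos (θ i - θ j)) * x j)
      = -(Real.cos (θ i - θ j) * (x i * x j)) := by
    intro j hj
    rw [if_neg (by simp at hj; exact fun h => hj h.symm)]
    ring
  rw [Finset.sum_congr rfl h1]
  have hcos : ∀ k, Real.cos (θ k - θ i) = Real.cos (θ i - θ k) := fun k => by
    rw [← Real.cos_neg, neg_sub]
  simp_rw [hcos, mul_sub, Finset.sum_sub_distrib, Finset.sum_neg_distrib]
  have h2 : x i * ((- -∑ k ∈ Finset.univ \ {i}, Real.cos (θ i - θ k)) * x i)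
      = ∑ k ∈ Finset.univ \ {i}, Real.cos (θ i - θ k) * x i ^ 2 := by
    rw [neg_neg, Finset.sum_mul, Finset.mul_sum]
    exact Finset.sum_congr rfl fun k _ => by ring
  rw [h2]
  ring

lemma symmetrize (N : ℕ) (d : Fin N → Fin N → ℝ) (hd : ∀ i j, d i j = d j i)
    (x : Fin N → ℝ) :
    ∑ i, ∑ j, d i j * (x i ^ 2 - x i * x j)
      = (1/2) * ∑ i, ∑ j, d i j * (x i - x j) ^ 2 := by
  have key : ∑ i, ∑ j, d i j * x j ^ 2 = ∑ i, ∑ j, d i j * x i ^ 2 := by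
    rw [Finset.sum_comm]
    exact Finset.sum_congr rfl fun i _ => Finset.sum_congr rfl fun j _ => by rw [hd]
  have e1 : ∀ i j : Fin N, d i j * (x i - x j) ^ 2
      = d i j * x i ^ 2 - 2 * (d i j * (x i * x j)) + d i j * x j ^ 2 := by
    intro i j; ring
  have e2 : ∀ i j : Fin N, d i j * (x i ^ 2 - x i * x j)
      = d i j * x i ^ 2 - d i j * (x i * x j) := by intro i j; ring
  simp_rw [e1, e2, Finset.sum_add_distrib, Finset.sum_sub_distrib, ← Finset.mul_sum]
  rw [key]
  ring

theorem stmt3 (N : ℕ) (hN : 2 ≤ N) (θ : Fin N → ℝ)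
    (hbd : ∀ i j, |θ i - θ j| ≤ Real.pi)
    (hstab : NegSemidefJ N θ) :
    ∀ ζ ∈ Set.Icc (0 : ℝ) 1, NegSemidefJ N (fun i => ζ * θ i) := by
  rintro ζ ⟨h0, h1⟩
  obtain ⟨-, hpos⟩ := posSemidef_iff_dotProduct_mulVec.mp hstab
  refine posSemidef_iff_dotProduct_mulVec.mpr ⟨(Jmat_isHermitian N _).neg, fun x => ?_⟩
  have hq := hpos x
  simp only [star_trivial] at hq ⊢
  rw [quadform] at hq ⊢
  have hdiff : ∑ i, ∑ j, Real.cos ((fun i => ζ * θ i) i - (fun i => ζ * θ i) j) * (x i ^ 2 - x i * x j)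
      - ∑ i, ∑ j, Real.cos (θ i - θ j) * (x i ^ 2 - x i * x j)
      = ∑ i, ∑ j, (Real.cos (ζ * (θ i - θ j)) - Real.cos (θ i - θ j)) * (x i ^ 2 - x i * x j) := by
    simp_rw [sub_mul, Finset.sum_sub_distrib, mul_sub]
  have hsym : ∀ i j, (Real.cos (ζ * (θ i - θ j)) - Real.cos (θ i - θ j))
      = (Real.cos (ζ * (θ j - θ i)) - Real.cos (θ j - θ i)) := by
    intro i j
    rw [← Real.cos_neg (ζ * (θ i - θ j)), ← mul_neg, neg_sub,
      ← Real.cos_neg (θ i - θ j), neg_sub]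
  have hnn : 0 ≤ ∑ i, ∑ j, (Real.cos (ζ * (θ i - θ j)) - Real.cos (θ i - θ j)) * (x i ^ 2 - x i * x j) := by
    rw [symmetrize N _ hsym x]
    apply mul_nonneg (by norm_num)
    refine Finset.sum_nonneg fun i _ => Finset.sum_nonneg fun j _ => ?_
    exact mul_nonneg (sub_nonneg.2 (cos_le_cos_mul h0 h1 (hbd i j))) (sq_nonneg _)
  linarith [hnn, hq, hdiff]
end

section
/- For every θ ∈ ℝ^N one has Σ_{i=1}^N f_i(θ)² = Σ_{i=1}^N ( N κ_i(θ) − κ_i(θ)² ), and consequently the Euclidean norm of f(θ) satisfies ‖f(θ)‖² ≤ N³/4 for all θ ∈ ℝ^N. -/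
open Real Finset

/-- The Kuramoto interaction vector field `f_i(θ) = Σ_j sin (θ_j - θ_i)`. -/
noncomputable def kuraF (N : ℕ) (θ : Fin N → ℝ) (i : Fin N) : ℝ :=
  ∑ j, Real.sin (θ j - θ i)

theorem stmt5 (N : ℕ) (hN : 2 ≤ N) (θ : Fin N → ℝ) :
    (∑ i, kuraF N θ i ^ 2 = ∑ i, ((N : ℝ) * kappa N θ i - kappa N θ i ^ 2)) ∧
    ∑ i, kuraF N θ i ^ 2 ≤ (N : ℝ) ^ 3 / 4 := by
  set C : ℝ := ∑ j, Real.cos (θ j) with hC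
  set S : ℝ := ∑ j, Real.sin (θ j) with hS
  have hf : ∀ i, kuraF N θ i = S * Real.cos (θ i) - C * Real.sin (θ i) := by
    intro i
    simp only [kuraF, Real.sin_sub, Finset.sum_sub_distrib, ← Finset.sum_mul, hC, hS]
  have hk : ∀ i, kappa N θ i = C * Real.cos (θ i) + S * Real.sin (θ i) := by
    intro i
    simp only [kappa, Real.cos_sub, Finset.sum_add_distrib, ← Finset.sum_mul, hC, hS]
  have hpyth : ∀ i, kuraF N θ i ^ 2 = C ^ 2 + S ^ 2 - kappa N θ i ^ 2 := by
    intro i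
    rw [hf i, hk i]
    have := Real.sin_sq_add_cos_sq (θ i)
    nlinarith [this]
  have hsumk : ∑ i, kappa N θ i = C ^ 2 + S ^ 2 := by
    simp only [hk, Finset.sum_add_distrib, ← Finset.mul_sum, ← hC, ← hS]
    ring
  have hmain : ∑ i, kuraF N θ i ^ 2
      = ∑ i, ((N : ℝ) * kappa N θ i - kappa N θ i ^ 2) := by
    calc ∑ i, kuraF N θ i ^ 2 = ∑ i, (C ^ 2 + S ^ 2 - kappa N θ i ^ 2) := by
          exact Finset.sum_congr rfl fun i _ => hpyth i
      _ = (N : ℝ) * (C ^ 2 + S ^ 2) - ∑ i, kappa N θ i ^ 2 := by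
          rw [Finset.sum_sub_distrib, Finset.sum_const, Finset.card_univ,
            Fintype.card_fin, nsmul_eq_mul]
      _ = (N : ℝ) * ∑ i, kappa N θ i - ∑ i, kappa N θ i ^ 2 := by rw [hsumk]
      _ = ∑ i, ((N : ℝ) * kappa N θ i - kappa N θ i ^ 2) := by
          rw [Finset.sum_sub_distrib, Finset.mul_sum]
  refine ⟨hmain, ?_⟩
  rw [hmain]
  have hbound : ∀ i : Fin N, (N : ℝ) * kappa N θ i - kappa N θ i ^ 2 ≤ (N : ℝ) ^ 2 / 4 := by
    intro i
    nlinarith [sq_nonneg (kappa N θ i - (N : ℝ) / 2)]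
  calc ∑ i, ((N : ℝ) * kappa N θ i - kappa N θ i ^ 2)
      ≤ ∑ _i : Fin N, (N : ℝ) ^ 2 / 4 := Finset.sum_le_sum fun i _ => hbound i
    _ = (N : ℝ) ^ 3 / 4 := by
        rw [Finset.sum_const, Finset.card_univ, Fintype.card_fin, nsmul_eq_mul]; ring
end

section
/- The set S_ω := { f(θ) : θ ∈ ℝ^N, κ_i(θ) > 0 for all i, and Σ_{i=1}^N 1/κ_i(θ) ≤ 2 } is a convex subset of ℝ^N. -/
open Real Finset

/-- The set `S_ω` of frequency vectors admitting a stable fully synchronized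
configuration: images `f(θ)` of configurations with `κ_i(θ) > 0` for all `i` and
`Σ_i 1/κ_i(θ) ≤ 2`. -/
def stableFreqSet (N : ℕ) : Set (Fin N → ℝ) :=
  {ω | ∃ θ : Fin N → ℝ, (∀ i, 0 < kappa N θ i) ∧ (∑ i, 1 / kappa N θ i ≤ 2) ∧
    ω = kuraF N θ}

/-- Joint concavity (superadditivity form) of `(a,b) ↦ √(a²-b²)`. -/
lemma key_concave (t s a1 a2 b1 b2 : ℝ) (ht : 0 ≤ t) (hs : 0 ≤ s)
    (h1 : |b1| < a1) (h2 : |b2| < a2) :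
    t * Real.sqrt (a1^2 - b1^2) + s * Real.sqrt (a2^2 - b2^2)
      ≤ Real.sqrt ((t*a1+s*a2)^2 - (t*b1+s*b2)^2) := by
  have hb1 := abs_lt.mp h1
  have hb2 := abs_lt.mp h2
  have hu1 : (0:ℝ) ≤ a1^2 - b1^2 := by nlinarith [hb1.1, hb1.2, hb2.1, hb2.2]
  have hu2 : (0:ℝ) ≤ a2^2 - b2^2 := by nlinarith [hb1.1, hb1.2, hb2.1, hb2.2]
  have hprod : Real.sqrt (a1^2 - b1^2) * Real.sqrt (a2^2 - b2^2) ≤ a1*a2 - b1*b2 := by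
    rw [← Real.sqrt_mul hu1]
    have hab : (0:ℝ) ≤ a1*a2 - b1*b2 := by nlinarith [hb1.1, hb1.2, hb2.1, hb2.2]
    have : (a1^2 - b1^2) * (a2^2 - b2^2) ≤ (a1*a2 - b1*b2)^2 := by
      nlinarith [sq_nonneg (a1*b2 - a2*b1)]
    calc Real.sqrt ((a1^2 - b1^2) * (a2^2 - b2^2)) ≤ Real.sqrt ((a1*a2 - b1*b2)^2) :=
          Real.sqrt_le_sqrt this
      _ = a1*a2 - b1*b2 := Real.sqrt_sq hab
  have hL : 0 ≤ t * Real.sqrt (a1^2 - b1^2) + s * Real.sqrt (a2^2 - b2^2) := by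
    positivity
  have hy : (0:ℝ) ≤ (t*a1+s*a2)^2 - (t*b1+s*b2)^2 := by
    have p1 : t*b1 ≤ t*a1 := by nlinarith [hb1.2]
    have p2 : t*(-a1) ≤ t*b1 := by nlinarith [hb1.1]
    have p3 : s*b2 ≤ s*a2 := by nlinarith [hb2.2]
    have p4 : s*(-a2) ≤ s*b2 := by nlinarith [hb2.1]
    nlinarith [mul_nonneg (by linarith : (0:ℝ) ≤ t*a1+s*a2+(t*b1+s*b2))
      (by linarith : (0:ℝ) ≤ t*a1+s*a2-(t*b1+s*b2))]
  rw [Real.le_sqrt hL hy]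
  have e1 := Real.sq_sqrt hu1
  have e2 := Real.sq_sqrt hu2
  have E1 : t^2 * Real.sqrt (a1^2 - b1^2) ^ 2 = t^2 * (a1^2 - b1^2) := by rw [e1]
  have E2 : s^2 * Real.sqrt (a2^2 - b2^2) ^ 2 = s^2 * (a2^2 - b2^2) := by rw [e2]
  nlinarith [mul_le_mul_of_nonneg_left hprod (mul_nonneg ht hs), E1, E2]


lemma mem_char (N : ℕ) (hN : 2 ≤ N) (ω : Fin N → ℝ) :
    ω ∈ stableFreqSet N ↔
      ((∑ i, ω i) = 0 ∧ ∃ r : ℝ, (∀ i, |ω i| < r) ∧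
        r^2 ≤ ∑ i, Real.sqrt (r^2 - ω i ^ 2)) := by
  haveI : NeZero N := ⟨by omega⟩
  constructor
  · rintro ⟨θ, hκ, hsum, rfl⟩
    set A := ∑ j, Real.sin (θ j) with hA
    set B := ∑ j, Real.cos (θ j) with hB
    have hf : ∀ i, kuraF N θ i = A * Real.cos (θ i) - B * Real.sin (θ i) := by
      intro i
      unfold kuraF
      simp only [Real.sin_sub]
      rw [Finset.sum_sub_distrib, ← Finset.sum_mul, ← Finset.sum_mul]
    have hk : ∀ i, kappa N θ i = B * Real.cos (θ i) + A * Real.sin (θ i) := by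
      intro i
      unfold kappa
      simp only [Real.cos_sub]
      rw [Finset.sum_add_distrib, ← Finset.sum_mul, ← Finset.sum_mul]
    have hsq : ∀ i, (kappa N θ i)^2 + (kuraF N θ i)^2 = A^2 + B^2 := by
      intro i
      rw [hf, hk]
      nlinarith [Real.sin_sq_add_cos_sq (θ i)]
    have hsumk : ∑ i, kappa N θ i = A^2 + B^2 := by
      calc ∑ i, kappa N θ i = ∑ i, (B * Real.cos (θ i) + A * Real.sin (θ i)) :=
            Finset.sum_congr rfl fun i _ => hk i
        _ = B * B + A * A := by
            rw [Finset.sum_add_distrib, ← Finset.mul_sum, ← Finset.mul_sum]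
        _ = A^2 + B^2 := by ring
    have hsumf : ∑ i, kuraF N θ i = 0 := by
      calc ∑ i, kuraF N θ i = ∑ i, (A * Real.cos (θ i) - B * Real.sin (θ i)) :=
            Finset.sum_congr rfl fun i _ => hf i
        _ = A * B - B * A := by
            rw [Finset.sum_sub_distrib, ← Finset.mul_sum, ← Finset.mul_sum]
        _ = 0 := by ring
    have hpos : 0 < A^2 + B^2 := by
      rw [← hsumk]
      exact Finset.sum_pos (fun i _ => hκ i) Finset.univ_nonempty
    refine ⟨hsumf, Real.sqrt (A^2 + B^2), ?_, ?_⟩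
    · intro i
      have hr2 : Real.sqrt (A^2+B^2) ^ 2 = A^2 + B^2 := Real.sq_sqrt hpos.le
      have h1 : (kuraF N θ i)^2 < A^2 + B^2 := by nlinarith [hκ i, hsq i]
      have h2 := Real.sqrt_lt_sqrt (sq_nonneg (kuraF N θ i)) h1
      rwa [Real.sqrt_sq_eq_abs] at h2
    · have hr2 : Real.sqrt (A^2+B^2) ^ 2 = A^2 + B^2 := Real.sq_sqrt hpos.le
      have : ∀ i, Real.sqrt (Real.sqrt (A^2+B^2)^2 - kuraF N θ i ^ 2) = kappa N θ i := by
        intro i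
        rw [hr2, show A^2 + B^2 - kuraF N θ i ^ 2 = (kappa N θ i)^2 by
          have := hsq i; linarith]
        exact Real.sqrt_sq (hκ i).le
      rw [Finset.sum_congr rfl fun i _ => this i, hsumk, hr2]
  · rintro ⟨hsum0, r, hr, hge⟩
    have i0 : Fin N := ⟨0, by omega⟩
    have hr0 : 0 < r := lt_of_le_of_lt (abs_nonneg _) (hr i0)
    set g : ℝ → ℝ := fun x => (∑ i, Real.sqrt (x^2 - ω i ^ 2)) - x^2 with hg
    have hg_cont : Continuous g := by
      apply Continuous.sub
      · exact continuous_finset_sum _ fun i _ =>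
          Real.continuous_sqrt.comp (by continuity)
      · continuity
    set E : Set ℝ := {x | r ≤ x ∧ 0 ≤ g x} with hE
    have hEr : r ∈ E := ⟨le_refl r, by simpa [hg] using sub_nonneg.mpr hge⟩
    have hEsub : E ⊆ Set.Icc r N := by
      rintro x ⟨hx1, hx2⟩
      refine ⟨hx1, ?_⟩
      have hx0 : 0 < x := lt_of_lt_of_le hr0 hx1
      have hb : ∀ i : Fin N, Real.sqrt (x^2 - ω i ^2) ≤ x := by
        intro i
        calc Real.sqrt (x^2 - ω i ^2) ≤ Real.sqrt (x^2) :=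
              Real.sqrt_le_sqrt (by nlinarith [sq_nonneg (ω i)])
          _ = x := Real.sqrt_sq hx0.le
      have hsumle : (∑ i, Real.sqrt (x^2 - ω i ^2)) ≤ N * x := by
        calc (∑ i, Real.sqrt (x^2 - ω i ^2)) ≤ ∑ _i : Fin N, x :=
              Finset.sum_le_sum fun i _ => hb i
          _ = N * x := by simp [mul_comm]
      have hx2' : x^2 ≤ N * x := by
        have : 0 ≤ g x := hx2
        simp only [hg] at this
        linarith
      nlinarith
    have hEclosed : IsClosed E := by
      have : E = {x | r ≤ x} ∩ {x | 0 ≤ g x} := rfl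
      rw [this]
      exact (isClosed_le continuous_const continuous_id).inter
        (isClosed_le continuous_const hg_cont)
    have hEcpt : IsCompact E := (isCompact_Icc).of_isClosed_subset hEclosed hEsub
    set R := sSup E with hRdef
    have hRmem : R ∈ E := hEcpt.sSup_mem ⟨r, hEr⟩
    obtain ⟨hRr, hgR⟩ := hRmem
    have hR0 : 0 < R := lt_of_lt_of_le hr0 hRr
    have hbdd : BddAbove E := hEcpt.bddAbove
    have hmax : ∀ x, R < x → g x < 0 := by
      intro x hx
      by_contra h
      push_neg at h
      have hxE : x ∈ E := ⟨le_of_lt (lt_of_le_of_lt hRr hx), h⟩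
      exact absurd (le_csSup hbdd hxE) (not_le.mpr hx)
    have hgR0 : g R = 0 := by
      by_contra h
      have hlt : 0 < g R := lt_of_le_of_ne hgR (Ne.symm h)
      have h1 : ∀ᶠ x in nhds R, 0 < g x :=
        (hg_cont.tendsto R).eventually (eventually_gt_nhds hlt)
      have h2 : ∀ᶠ x in nhdsWithin R (Set.Ioi R), 0 < g x :=
        h1.filter_mono nhdsWithin_le_nhds
      obtain ⟨x, hx1, hx2⟩ := (h2.and self_mem_nhdsWithin).exists
      exact absurd hx1 (not_lt.mpr (hmax x hx2).le)
    have hωR : ∀ i, ω i ^ 2 < R ^ 2 := by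
      intro i
      have := abs_lt.mp (lt_of_lt_of_le (hr i) hRr)
      nlinarith [this.1, this.2]
    have hκpos : ∀ i, 0 < Real.sqrt (R^2 - ω i ^2) := fun i =>
      Real.sqrt_pos.mpr (by linarith [hωR i])
    have hsumκ : ∑ i, Real.sqrt (R^2 - ω i ^2) = R^2 := by
      have := hgR0
      simp only [hg] at this
      linarith
    have hcond : ∑ i, 1 / Real.sqrt (R^2 - ω i ^2) ≤ 2 := by
      by_contra hgt
      push_neg at hgt
      have hder : HasDerivAt g ((∑ i, R / Real.sqrt (R^2 - ω i ^2)) - 2*R) R := by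
        have hsumder : HasDerivAt (fun x => ∑ i, Real.sqrt (x^2 - ω i ^2))
            (∑ i, R / Real.sqrt (R^2 - ω i ^2)) R := by
          apply HasDerivAt.fun_sum
          intro i _
          have h1 : HasDerivAt (fun x : ℝ => x^2 - ω i ^2) (2*R) R := by
            simpa using (hasDerivAt_pow 2 R).sub_const (ω i ^2)
          have hne : R^2 - ω i ^2 ≠ 0 := by linarith [hωR i]
          have h2 := (Real.hasDerivAt_sqrt hne).comp R h1
          refine h2.congr_deriv ?_
          have := (hκpos i).ne'
          field_simp
        have hx2 : HasDerivAt (fun x : ℝ => x^2) (2*R) R := by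
          simpa using hasDerivAt_pow 2 R
        simpa [hg] using hsumder.fun_sub hx2
      have hdpos : 0 < (∑ i, R / Real.sqrt (R^2 - ω i ^2)) - 2*R := by
        have : ∑ i, R / Real.sqrt (R^2 - ω i ^2)
            = R * ∑ i, 1 / Real.sqrt (R^2 - ω i ^2) := by
          rw [Finset.mul_sum]
          exact Finset.sum_congr rfl fun i _ => by rw [mul_one_div]
        rw [this]
        nlinarith
      rw [hasDerivAt_iff_tendsto_slope] at hder
      have hslope : ∀ᶠ x in nhdsWithin R {R}ᶜ, 0 < slope g R x :=
        hder.eventually (eventually_gt_nhds hdpos)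
      have hmono : nhdsWithin R (Set.Ioi R) ≤ nhdsWithin R {R}ᶜ :=
        nhdsWithin_mono R fun x hx => ne_of_gt hx
      obtain ⟨x, hx1, hx2⟩ :=
        ((hslope.filter_mono hmono).and self_mem_nhdsWithin).exists
      have hxR : R < x := hx2
      rw [slope_def_field] at hx1
      rw [hgR0, sub_zero] at hx1
      have : 0 < g x := by
        rcases div_pos_iff.mp hx1 with ⟨h1, _⟩ | ⟨_, h2⟩
        · exact h1
        · linarith
      linarith [hmax x hxR]
    set θ : Fin N → ℝ := fun i => Real.arcsin (-ω i / R) with hθ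
    have habs : ∀ i : Fin N, -R < ω i ∧ ω i < R := fun i =>
      abs_lt.mp (lt_of_lt_of_le (hr i) hRr)
    have hsin : ∀ i : Fin N, Real.sin (θ i) = -ω i / R := by
      intro i
      apply Real.sin_arcsin
      · rw [le_div_iff₀ hR0]; linarith [(habs i).2]
      · rw [div_le_one hR0]; linarith [(habs i).1]
    have hcos : ∀ i : Fin N, Real.cos (θ i) = Real.sqrt (R^2 - ω i ^2) / R := by
      intro i
      rw [hθ]
      rw [Real.cos_arcsin]
      have h1 : 1 - (-ω i / R)^2 = (R^2 - ω i ^2) / R^2 := by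
        field_simp
      rw [h1, Real.sqrt_div (by linarith [hωR i]), Real.sqrt_sq hR0.le]
    have hSsin : ∑ j, Real.sin (θ j) = 0 := by
      rw [Finset.sum_congr rfl fun j _ => hsin j]
      rw [← Finset.sum_div]
      rw [Finset.sum_neg_distrib, hsum0, neg_zero, zero_div]
    have hScos : ∑ j, Real.cos (θ j) = R := by
      rw [Finset.sum_congr rfl fun j _ => hcos j]
      rw [← Finset.sum_div, hsumκ, sq, mul_div_assoc, div_self hR0.ne', mul_one]
    have hkap : ∀ i, kappa N θ i = Real.sqrt (R^2 - ω i ^2) := by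
      intro i
      unfold kappa
      simp only [Real.cos_sub]
      rw [Finset.sum_add_distrib, ← Finset.sum_mul, ← Finset.sum_mul,
        hScos, hSsin, hcos i, zero_mul, add_zero, mul_div_assoc']
      rw [mul_comm, mul_div_assoc, div_self hR0.ne', mul_one]
    have hkur : ∀ i, kuraF N θ i = ω i := by
      intro i
      unfold kuraF
      simp only [Real.sin_sub]
      rw [Finset.sum_sub_distrib, ← Finset.sum_mul, ← Finset.sum_mul,
        hScos, hSsin, hsin i, zero_mul]
      field_simp
      ring
    refine ⟨θ, fun i => by rw [hkap i]; exact hκpos i, ?_, ?_⟩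
    · rw [Finset.sum_congr rfl fun i _ => by rw [hkap i]]
      exact hcond
    · funext i
      rw [hkur i]

theorem stmt7 (N : ℕ) (hN : 2 ≤ N) : Convex ℝ (stableFreqSet N) := by
  intro ω1 h1 ω2 h2 t s ht hs hts
  rw [mem_char N hN] at h1 h2 ⊢
  obtain ⟨hz1, r1, hr1, hg1⟩ := h1
  obtain ⟨hz2, r2, hr2, hg2⟩ := h2
  have hr10 : 0 < r1 := lt_of_le_of_lt (abs_nonneg _) (hr1 ⟨0, by omega⟩)
  have hr20 : 0 < r2 := lt_of_le_of_lt (abs_nonneg _) (hr2 ⟨0, by omega⟩)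
  constructor
  · simp only [Pi.add_apply, Pi.smul_apply, smul_eq_mul]
    rw [Finset.sum_add_distrib, ← Finset.mul_sum, ← Finset.mul_sum, hz1, hz2]
    ring
  · refine ⟨t*r1 + s*r2, ?_, ?_⟩
    · intro i
      simp only [Pi.add_apply, Pi.smul_apply, smul_eq_mul]
      have hle : |t * ω1 i + s * ω2 i| ≤ t * |ω1 i| + s * |ω2 i| :=
        (abs_add_le _ _).trans (by
          rw [abs_mul, abs_mul, abs_of_nonneg ht, abs_of_nonneg hs])
      have key : t * |ω1 i| + s * |ω2 i| < t*r1 + s*r2 := by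
        rcases lt_or_ge 0 t with htp | htz
        · have h1' := mul_lt_mul_of_pos_left (hr1 i) htp
          have h2' := mul_le_mul_of_nonneg_left (hr2 i).le hs
          linarith
        · have ht0 : t = 0 := le_antisymm htz ht
          have hs1 : s = 1 := by linarith
          have h2' := mul_lt_mul_of_pos_left (hr2 i) (by rw [hs1]; norm_num : (0:ℝ) < s)
          rw [ht0]
          simpa using h2'
      linarith
    · have hterm : ∀ i : Fin N,
          t * Real.sqrt (r1^2 - ω1 i ^2) + s * Real.sqrt (r2^2 - ω2 i ^2)
            ≤ Real.sqrt ((t*r1+s*r2)^2 - ((t • ω1 + s • ω2) i)^2) := by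
        intro i
        simp only [Pi.add_apply, Pi.smul_apply, smul_eq_mul]
        exact key_concave t s r1 r2 (ω1 i) (ω2 i) ht hs (hr1 i) (hr2 i)
      have hsum : ∑ i, (t * Real.sqrt (r1^2 - ω1 i ^2) + s * Real.sqrt (r2^2 - ω2 i ^2))
          ≤ ∑ i, Real.sqrt ((t*r1+s*r2)^2 - ((t • ω1 + s • ω2) i)^2) :=
        Finset.sum_le_sum fun i _ => hterm i
      have hlhs : t * r1^2 + s * r2^2
          ≤ ∑ i, (t * Real.sqrt (r1^2 - ω1 i ^2) + s * Real.sqrt (r2^2 - ω2 i ^2)) := by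
        rw [Finset.sum_add_distrib, ← Finset.mul_sum, ← Finset.mul_sum]
        have := mul_le_mul_of_nonneg_left hg1 ht
        have := mul_le_mul_of_nonneg_left hg2 hs
        linarith
      have hsq : (t*r1 + s*r2)^2 ≤ t * r1^2 + s * r2^2 := by
        nlinarith [mul_nonneg (mul_nonneg ht hs) (sq_nonneg (r1 - r2))]
      linarith
end

section
/- For every θ in the cube [0, π/2]^N, the matrix J(θ) is negative semidefinite. -/
open Real Matrix Finset

/-- On the cube `[0, π/2]^N` the Jacobian is negative semidefinite, i.e. `-J(θ)` is
positive semidefinite. -/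
theorem stmt8 (N : ℕ) (hN : 2 ≤ N) (θ : Fin N → ℝ)
    (hθ : ∀ i, θ i ∈ Set.Icc (0 : ℝ) (Real.pi / 2)) :
    (-(Jmat N θ)).PosSemidef := by
  classical
  set c : Fin N → Fin N → ℝ := fun i j => if i = j then 0 else Real.cos (θ i - θ j) with hc
  have hsym : ∀ i j, c i j = c j i := by
    intro i j
    simp only [hc]
    rcases eq_or_ne i j with h | h
    · simp [h]
    · rw [if_neg h, if_neg (Ne.symm h), ← Real.cos_neg (θ i - θ j)]
      ring_nf
  have hnn : ∀ i j, 0 ≤ c i j := by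
    intro i j
    simp only [hc]
    rcases eq_or_ne i j with h | h
    · simp [h]
    · rw [if_neg h]
      apply Real.cos_nonneg_of_mem_Icc
      have h1 := hθ i; have h2 := hθ j
      simp only [Set.mem_Icc] at *
      constructor <;> [linarith [h1.2, h2.1]; linarith [h1.1, h2.2]]
  -- entries of -J in terms of c
  have hdiag : ∀ i, (-(Jmat N θ)) i i = ∑ k, c i k := by
    intro i
    simp only [Jmat, Matrix.neg_apply, Matrix.of_apply, eq_self_iff_true, if_true, neg_neg]
    rw [Finset.sum_eq_sum_sdiff_singleton_add (Finset.mem_univ i) (fun k => c i k)]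
    simp only [hc, if_pos rfl, add_zero]
    apply Finset.sum_congr rfl
    intro k hk
    rw [Finset.mem_sdiff, Finset.mem_singleton] at hk
    rw [if_neg (fun h => hk.2 h.symm), ← Real.cos_neg (θ i - θ k)]
    ring_nf
  have hoff : ∀ i j, i ≠ j → (-(Jmat N θ)) i j = -c i j := by
    intro i j h
    simp only [Jmat, Matrix.neg_apply, Matrix.of_apply, if_neg h, hc]
  rw [Matrix.posSemidef_iff_dotProduct_mulVec]
  constructor
  · -- Hermitian
    rw [Matrix.IsHermitian]
    ext i j
    simp only [Matrix.conjTranspose_apply, star_trivial]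
    rcases eq_or_ne j i with h | h
    · rw [h]
    · rw [hoff j i h, hoff i j (Ne.symm h), hsym]
  · intro x
    simp only [star_trivial]
    have hmv : ∀ i, ((-(Jmat N θ)) *ᵥ x) i = (∑ k, c i k) * x i - ∑ j, c i j * x j := by
      intro i
      rw [Matrix.mulVec, dotProduct]
      rw [Finset.sum_eq_sum_sdiff_singleton_add (Finset.mem_univ i)
        (fun j => (-(Jmat N θ)) i j * x j)]
      rw [show (∑ j, c i j * x j) = ∑ j ∈ Finset.univ \ {i}, c i j * x j + c i i * x i from
        (Finset.sum_eq_sum_sdiff_singleton_add (Finset.mem_univ i) (fun j => c i j * x j))]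
      rw [hdiag i]
      have : ∀ j ∈ Finset.univ \ {i}, (-(Jmat N θ)) i j * x j = -(c i j * x j) := by
        intro j hj
        rw [Finset.mem_sdiff, Finset.mem_singleton] at hj
        rw [hoff i j (Ne.symm hj.2)]; ring
      rw [Finset.sum_congr rfl this, Finset.sum_neg_distrib]
      have hcii : c i i = 0 := by simp [hc]
      rw [hcii]; ring
    have hQ : dotProduct x ((-(Jmat N θ)) *ᵥ x)
        = ∑ i, ∑ j, c i j * (x i ^ 2 - x i * x j) := by
      rw [dotProduct]
      apply Finset.sum_congr rfl
      intro i _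
      rw [hmv i, Finset.sum_mul, ← Finset.sum_sub_distrib, Finset.mul_sum]
      apply Finset.sum_congr rfl
      intro j _
      ring
    have hswap : (∑ i, ∑ j, c i j * (x j ^ 2 - x j * x i))
        = ∑ i, ∑ j, c i j * (x i ^ 2 - x i * x j) := by
      rw [Finset.sum_comm]
      apply Finset.sum_congr rfl; intro i _
      apply Finset.sum_congr rfl; intro j _
      rw [hsym]
    have key : ∑ i, ∑ j, c i j * (x i - x j) ^ 2
        = 2 * dotProduct x ((-(Jmat N θ)) *ᵥ x) := by
      rw [hQ]
      have : ∀ i j : Fin N, c i j * (x i - x j) ^ 2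
          = c i j * (x i ^ 2 - x i * x j) + c i j * (x j ^ 2 - x j * x i) := by
        intro i j; ring
      calc ∑ i, ∑ j, c i j * (x i - x j) ^ 2
          = ∑ i, ∑ j, (c i j * (x i ^ 2 - x i * x j) + c i j * (x j ^ 2 - x j * x i)) := by
            apply Finset.sum_congr rfl; intro i _
            apply Finset.sum_congr rfl; intro j _
            exact this i j
        _ = (∑ i, ∑ j, c i j * (x i ^ 2 - x i * x j))
            + ∑ i, ∑ j, c i j * (x j ^ 2 - x j * x i) := by
            rw [← Finset.sum_add_distrib]
            apply Finset.sum_congr rfl; intro i _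
            rw [← Finset.sum_add_distrib]
        _ = 2 * ∑ i, ∑ j, c i j * (x i ^ 2 - x i * x j) := by rw [hswap]; ring
    have hpos : 0 ≤ ∑ i, ∑ j, c i j * (x i - x j) ^ 2 := by
      apply Finset.sum_nonneg; intro i _
      apply Finset.sum_nonneg; intro j _
      exact mul_nonneg (hnn i j) (sq_nonneg _)
    linarith [key ▸ hpos]
end
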